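/- Let m, ℓ, k ∈ ℕ and let V̂ ∈ ℂ^{m×ℓ}, V, W ∈ ℂ^{m×k}, Λ ∈ ℂ^{k×k}, and define A₀ = V·W^*·V̂ and A₁ = V·Λ·W^*·V̂. Suppose V₀ ∈ ℂ^{m×k}, Σ₀ ∈ ℂ^{k×k}, W₀ ∈ ℂ^{ℓ×k} and S ∈ ℂ^{k×k} satisfy: A₀ = V₀·Σ₀·W₀^*, V₀^*·V₀ = I_k, W₀^*·W₀ = I_k, Σ₀ is invertible, S is invertible, and V = V₀·S. Then V₀^*·A₁·W₀·Σ₀^{−1} = S·Λ·S^{−1}; in particular, V₀^*·A₁·W₀·Σ₀^{−1} is similar to Λ, so it has the same eigenvalues as Λ. -/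
import Mathlib

open Matrix

theorem beyn_reduced_matrix_similar
    (m l k : ℕ)
    (Vhat : Matrix (Fin m) (Fin l) ℂ) (V W : Matrix (Fin m) (Fin k) ℂ)
    (Lam S Sig0 : Matrix (Fin k) (Fin k) ℂ)
    (V0 : Matrix (Fin m) (Fin k) ℂ) (W0 : Matrix (Fin l) (Fin k) ℂ)
    (A0 A1 : Matrix (Fin m) (Fin l) ℂ)
    (hA0 : A0 = V * Wᴴ * Vhat) (hA1 : A1 = V * Lam * Wᴴ * Vhat)
    (hSVD : A0 = V0 * Sig0 * W0ᴴ)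
    (hV0 : V0ᴴ * V0 = 1) (hW0 : W0ᴴ * W0 = 1)
    (hSig0 : IsUnit Sig0.det) (hS : IsUnit S.det)
    (hVS : V = V0 * S) :
    V0ᴴ * A1 * W0 * Sig0⁻¹ = S * Lam * S⁻¹ ∧
      spectrum ℂ (V0ᴴ * A1 * W0 * Sig0⁻¹) = spectrum ℂ Lam := by
  have key : Wᴴ * Vhat = S⁻¹ * (Sig0 * W0ᴴ) := by
    have h1 : V0ᴴ * A0 = S * (Wᴴ * Vhat) := by
      rw [hA0, hVS]
      calc V0ᴴ * (V0 * S * Wᴴ * Vhat) = (V0ᴴ * V0) * (S * (Wᴴ * Vhat)) := by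
            simp only [Matrix.mul_assoc]
          _ = S * (Wᴴ * Vhat) := by rw [hV0, Matrix.one_mul]
    have h2 : V0ᴴ * A0 = Sig0 * W0ᴴ := by
      rw [hSVD]
      calc V0ᴴ * (V0 * Sig0 * W0ᴴ) = (V0ᴴ * V0) * (Sig0 * W0ᴴ) := by
            simp only [Matrix.mul_assoc]
          _ = Sig0 * W0ᴴ := by rw [hV0, Matrix.one_mul]
    have := h1.symm.trans h2
    rw [← this, ← Matrix.mul_assoc, Matrix.nonsing_inv_mul S hS, Matrix.one_mul]
  have main : V0ᴴ * A1 * W0 * Sig0⁻¹ = S * Lam * S⁻¹ := by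
    rw [hA1, hVS]
    have : V0ᴴ * (V0 * S * Lam * Wᴴ * Vhat) = S * Lam * (Wᴴ * Vhat) := by
      calc V0ᴴ * (V0 * S * Lam * Wᴴ * Vhat)
          = (V0ᴴ * V0) * (S * Lam * (Wᴴ * Vhat)) := by simp only [Matrix.mul_assoc]
        _ = S * Lam * (Wᴴ * Vhat) := by rw [hV0, Matrix.one_mul]
    rw [this, key]
    calc S * Lam * (S⁻¹ * (Sig0 * W0ᴴ)) * W0 * Sig0⁻¹
        = S * Lam * S⁻¹ * (Sig0 * ((W0ᴴ * W0) * Sig0⁻¹)) := by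
          simp only [Matrix.mul_assoc]
      _ = S * Lam * S⁻¹ * (Sig0 * Sig0⁻¹) := by rw [hW0, Matrix.one_mul]
      _ = S * Lam * S⁻¹ := by rw [Matrix.mul_nonsing_inv Sig0 hSig0, Matrix.mul_one]
  refine ⟨main, ?_⟩
  rw [main]
  have hSu : IsUnit S := (Matrix.isUnit_iff_isUnit_det S).mpr hS
  have hcoe : (↑hSu.unit⁻¹ : Matrix (Fin k) (Fin k) ℂ) = S⁻¹ := Matrix.coe_units_inv _
  calc spectrum ℂ (S * Lam * S⁻¹) = spectrum ℂ ((hSu.unit : Matrix (Fin k) (Fin k) ℂ) * Lam * ↑hSu.unit⁻¹) := by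
        rw [hcoe, hSu.unit_spec]
    _ = spectrum ℂ Lam := spectrum.units_conjugate
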